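/- Let ⪯ be a monomial order on ℕ^N. For every ideal I ⊆ R = ℂ[x_1,…,x_N], the lattice ℕ^N is the disjoint union of in(D_0[I]) (the dual initial exponents of the dual space of I) and in(I) (the local initial exponents of I). -/

import Mathlib

open MvPolynomial

noncomputable section

/-- The polynomial ring `R = ℂ[x_1,…,x_N]`, with variables indexed by `Fin N`. -/
abbrev PolyR (N : ℕ) := MvPolynomial (Fin N) ℂ

/-- A dual functional `q = Σ_α c_α ∂^α` is encoded by its coefficient vector, i.e.
by an element of `MvPolynomial (Fin N) ℂ` (which is exactly the space of finitely
supported functions `ℕ^N →₀ ℂ`).  Its application to a polynomial `f` is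
`q(f) = Σ_α c_α · (coefficient of x^α in f)`. -/
def dapply {N : ℕ} (q f : PolyR N) : ℂ := ∑ α ∈ f.support, q.coeff α * f.coeff α

/-- The Macaulay dual space `D_0[I]` of an ideal `I`, as a `ℂ`-subspace of `D_0`. -/
def dualSpace {N : ℕ} (I : Ideal (PolyR N)) : Submodule ℂ (PolyR N) where
  carrier := {q | ∀ f ∈ I, dapply q f = 0}
  zero_mem' := by intro f _; simp [dapply]
  add_mem' := by
    intro a b ha hb f hf
    have h : dapply (a + b) f = dapply a f + dapply b f := by
      simp [dapply, MvPolynomial.coeff_add, add_mul, Finset.sum_add_distrib]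
    rw [h, ha f hf, hb f hf, add_zero]
  smul_mem' := by
    intro c q hq f hf
    have h : dapply (c • q) f = c * dapply q f := by
      simp [dapply, MvPolynomial.coeff_smul, Finset.mul_sum, mul_assoc]
    rw [h, hq f hf, mul_zero]

/-- The subspace of dual functionals all of whose exponents satisfy `P`. -/
def expSupported {N : ℕ} (P : (Fin N →₀ ℕ) → Prop) : Submodule ℂ (PolyR N) where
  carrier := {q | ∀ α ∈ q.support, P α}
  zero_mem' := by simp
  add_mem' := by
    intro a b ha hb α hα
    rcases Finset.mem_union.mp (MvPolynomial.support_add hα) with h | h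
    · exact ha α h
    · exact hb α h
  smul_mem' := by
    intro c q hq α hα
    exact hq α (MvPolynomial.support_smul hα)

/-- The truncated dual space `D_0^k[I]`: functionals in `D_0[I]` of order at most `k`
(in particular `0` belongs to it). -/
def truncDual {N : ℕ} (I : Ideal (PolyR N)) (k : ℕ) : Submodule ℂ (PolyR N) :=
  dualSpace I ⊓ expSupported (fun α => ∑ i, α i ≤ k)

/-- The eliminating truncated dual space `E_0^d[I, A]`, where the set of variables `A`
is given by a finite set of indices: functionals in `D_0[I]` with `ord_A ≤ d`. -/
def elimDual {N : ℕ} (I : Ideal (PolyR N)) (A : Finset (Fin N)) (d : ℕ) :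
    Submodule ℂ (PolyR N) :=
  dualSpace I ⊓ expSupported (fun α => ∑ i ∈ A, α i ≤ d)

open scoped Classical in
/-- The action `g · q` of the polynomial ring on dual functionals, determined by
`(g·q)(f) = q(g·f)`; concretely `g · ∂^α = Σ_{γ ≤ α} g_γ ∂^{α-γ}`. -/
def dmul {N : ℕ} (g q : PolyR N) : PolyR N :=
  ∑ γ ∈ g.support, ∑ α ∈ q.support,
    if γ ≤ α then (MvPolynomial.monomial (α - γ)) (g.coeff γ * q.coeff α) else 0

/-- The maximal ideal `m = ⟨x_1,…,x_N⟩` of the origin. -/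
def mIdeal (N : ℕ) : Ideal (PolyR N) := Ideal.span (Set.range MvPolynomial.X)

/-- The multiplicative set of polynomials not vanishing at the origin. -/
def atOrigin (N : ℕ) : Submonoid (PolyR N) where
  carrier := {g | MvPolynomial.constantCoeff g ≠ 0}
  one_mem' := by simp
  mul_mem' := by
    intro a b ha hb
    simp only [Set.mem_setOf_eq, map_mul]
    exact mul_ne_zero ha hb

/-- The local ring `R_0` of the origin: the localization of `R` at the maximal ideal
of the origin. -/
abbrev LocR (N : ℕ) := Localization (atOrigin N)

/-- The extension `I·R_0` of an ideal `I ⊆ R` to the local ring of the origin. -/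
def extIdeal {N : ℕ} (I : Ideal (PolyR N)) : Ideal (LocR N) :=
  Ideal.map (algebraMap (PolyR N) (LocR N)) I

/-- The contraction `I·R_0 ∩ R` of the extension of `I` back to `R`. -/
def contExt {N : ℕ} (I : Ideal (PolyR N)) : Ideal (PolyR N) :=
  Ideal.comap (algebraMap (PolyR N) (LocR N)) (extIdeal I)

/-- The local Hilbert function
`H_I(k) = dim_ℂ R/(I + m^{k+1}) − dim_ℂ R/(I + m^k)`
(note that for `k = 0` the subtrahend vanishes since `m^0 = R`). -/
def hilb {N : ℕ} (I : Ideal (PolyR N)) (k : ℕ) : ℕ :=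
  Module.finrank ℂ (PolyR N ⧸ (I + mIdeal N ^ (k + 1)))
    - Module.finrank ℂ (PolyR N ⧸ (I + mIdeal N ^ k))

/-- Given a monomial order `le` on `ℕ^N`, the set of local initial exponents of an
ideal `I`: `in(f)` is the `le`-smallest exponent in the support of a nonzero
`f ∈ I` (the initial term for the local order opposite to `le`). -/
def localIn {N : ℕ} (le : (Fin N →₀ ℕ) → (Fin N →₀ ℕ) → Prop)
    (I : Ideal (PolyR N)) : Set (Fin N →₀ ℕ) :=
  {α | ∃ f ∈ I, f ≠ 0 ∧ α ∈ f.support ∧ ∀ β ∈ f.support, le α β}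

/-- Given a monomial order `le` on `ℕ^N`, the set of dual initial exponents of a
subspace `L ⊆ D_0`: `in(q)` is the `le`-largest exponent in the support of a
nonzero `q ∈ L`. -/
def dualIn {N : ℕ} (le : (Fin N →₀ ℕ) → (Fin N →₀ ℕ) → Prop)
    (L : Submodule ℂ (PolyR N)) : Set (Fin N →₀ ℕ) :=
  {α | ∃ q ∈ L, q ≠ 0 ∧ α ∈ q.support ∧ ∀ β ∈ q.support, le β α}

set_option maxHeartbeats 1000000
set_option synthInstance.maxHeartbeats 400000

namespace Aux12

variable {N : ℕ}

/-- total degree of an exponent vector -/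
def deg (β : Fin N →₀ ℕ) : ℕ := ∑ i, β i

/-- the monomial `x^β` -/
def XM (β : Fin N →₀ ℕ) : PolyR N := MvPolynomial.monomial β 1

lemma support_XM (β : Fin N →₀ ℕ) : (XM β).support = {β} := by
  simp [XM, MvPolynomial.support_monomial]

lemma apply_le_deg (β : Fin N →₀ ℕ) (i : Fin N) : β i ≤ deg β :=
  Finset.single_le_sum (fun j _ => Nat.zero_le (β j)) (Finset.mem_univ i)

/-- the ideal generated by the variables -/
def mSpan (N : ℕ) : Ideal (PolyR N) := Ideal.span (Set.range MvPolynomial.X)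

lemma monomial_mem_pow (n : ℕ) : ∀ (β : Fin N →₀ ℕ) (c : ℂ), n ≤ deg β →
    MvPolynomial.monomial β c ∈ mSpan N ^ n := by
  induction n with
  | zero => intro β c _; simp
  | succ n ih =>
    intro β c h
    have hpos : 0 < deg β := lt_of_lt_of_le (Nat.succ_pos n) h
    have hj : ∃ j, β j ≠ 0 := by
      by_contra hc
      push_neg at hc
      have : deg β = 0 := Finset.sum_eq_zero fun i _ => hc i
      omega
    obtain ⟨j, hj⟩ := hj
    set β' : Fin N →₀ ℕ := β - Finsupp.single j 1 with hβ'
    have hsplit : β = Finsupp.single j 1 + β' := by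
      ext i
      rcases eq_or_ne i j with rfl | hne
      · simp [hβ', Finsupp.single_apply]
        omega
      · simp [hβ', Finsupp.single_apply, hne.symm, Ne.symm hne]
    have hdeg : deg β = deg β' + 1 := by
      rw [hsplit]
      unfold deg
      rw [Finset.sum_congr rfl (fun i _ => Finsupp.add_apply _ _ _),
        Finset.sum_add_distrib]
      have : ∑ i, (Finsupp.single j 1 : Fin N →₀ ℕ) i = 1 := by
        simp [Finsupp.single_apply]
      omega
    have hmon : MvPolynomial.monomial β c =
        MvPolynomial.monomial β' c * MvPolynomial.X j := by
      rw [MvPolynomial.X, MvPolynomial.monomial_mul, mul_one, hsplit, add_comm]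
    rw [hmon, pow_succ]
    exact Ideal.mul_mem_mul (ih β' c (by omega))
      (Ideal.subset_span ⟨j, rfl⟩)

lemma high_mem_pow (k : ℕ) (f : PolyR N) (hf : ∀ β ∈ f.support, k < deg β) :
    f ∈ mSpan N ^ (k + 1) := by
  rw [← MvPolynomial.support_sum_monomial_coeff f]
  exact Ideal.sum_mem _ fun β hβ => monomial_mem_pow (k + 1) β _ (hf β hβ)

lemma krull (J : Ideal (PolyR N)) (x : PolyR N)
    (hx : ∀ k : ℕ, x ∈ J ⊔ mSpan N ^ (k + 1)) :
    ∃ u : PolyR N, MvPolynomial.constantCoeff u ≠ 0 ∧ x * u ∈ J := by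
  classical
  set P : Ideal (PolyR N) :=
    RingHom.ker (MvPolynomial.constantCoeff : MvPolynomial (Fin N) ℂ →+* ℂ) with hPdef
  haveI hPprime : P.IsPrime := RingHom.ker_isPrime _
  set A := Localization.AtPrime P with hA
  haveI : IsNoetherianRing A :=
    IsLocalization.isNoetherianRing P.primeCompl A (MvPolynomial.isNoetherianRing)
  set φ := algebraMap (PolyR N) A with hφ
  set K := Ideal.map φ J with hK
  have hmle : Ideal.map φ (mSpan N) ≤ IsLocalRing.maximalIdeal A := by
    rw [mSpan, Ideal.map_span]
    rw [Ideal.span_le]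
    rintro _ ⟨_, ⟨i, rfl⟩, rfl⟩
    rw [SetLike.mem_coe, IsLocalRing.mem_maximalIdeal, mem_nonunits_iff,
      IsLocalization.AtPrime.isUnit_to_map_iff A P]
    intro hmem
    exact hmem (by simp [hPdef, RingHom.mem_ker])
  have hzmem : ∀ k : ℕ, φ x ∈ K ⊔ (IsLocalRing.maximalIdeal A) ^ (k + 1) := by
    intro k
    have h1 : φ x ∈ Ideal.map φ (J ⊔ mSpan N ^ (k + 1)) :=
      Ideal.mem_map_of_mem _ (hx k)
    rw [Ideal.map_sup, Ideal.map_pow] at h1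
    exact (sup_le_sup_left (Ideal.pow_right_mono hmle (k + 1)) K) h1
  have hφxK : φ x ∈ K := by
    by_cases hKT : K = ⊤
    · rw [hKT]; trivial
    · set π := Ideal.Quotient.mk K with hπ
      haveI : Nontrivial (A ⧸ K) := Ideal.Quotient.nontrivial_iff.mpr hKT
      haveI : IsLocalRing (A ⧸ K) :=
        IsLocalRing.of_surjective' π Ideal.Quotient.mk_surjective
      set n : Ideal (A ⧸ K) := Ideal.map π (IsLocalRing.maximalIdeal A) with hn
      have hKle : K ≤ IsLocalRing.maximalIdeal A := IsLocalRing.le_maximalIdeal hKT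
      have hnne : n ≠ ⊤ := by
        intro htop
        rw [hn] at htop
        have hc := Ideal.comap_map_of_surjective π Ideal.Quotient.mk_surjective
          (IsLocalRing.maximalIdeal A)
        rw [htop, Ideal.comap_top] at hc
        have hker : Ideal.comap π ⊥ = K := by
          rw [← RingHom.ker_eq_comap_bot, hπ, Ideal.mk_ker]
        rw [hker, sup_eq_left.mpr hKle] at hc
        exact (Ideal.IsMaximal.ne_top (IsLocalRing.maximalIdeal.isMaximal A)) hc.symm
      have hmem : π (φ x) ∈ ⨅ i : ℕ, n ^ i := by
        rw [Submodule.mem_iInf]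
        intro i
        cases i with
        | zero => show π (φ x) ∈ (1 : Ideal (A ⧸ K)); rw [Ideal.one_eq_top]; trivial
        | succ i =>
          have h1 : π (φ x) ∈ Ideal.map π (K ⊔ (IsLocalRing.maximalIdeal A) ^ (i + 1)) :=
            Ideal.mem_map_of_mem _ (hzmem i)
          rwa [Ideal.map_sup, Ideal.map_pow (R := A) (S := A ⧸ K), hπ, Ideal.map_quotient_self,
            bot_sup_eq] at h1
      rw [Ideal.iInf_pow_eq_bot_of_isLocalRing (R := A ⧸ K) n hnne, Submodule.mem_bot] at hmem
      rwa [hπ, Ideal.Quotient.eq_zero_iff_mem] at hmem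
  rw [hK, IsLocalization.mem_map_algebraMap_iff P.primeCompl A] at hφxK
  obtain ⟨⟨⟨a, haJ⟩, ⟨u, hu⟩⟩, heq⟩ := hφxK
  have hinj : Function.Injective φ := by
    apply IsLocalization.injective A (M := P.primeCompl)
    intro g hg
    refine mem_nonZeroDivisors_of_ne_zero ?_
    intro h0
    exact hg (by simp [h0, hPdef, RingHom.mem_ker])
  have hxu : x * u = a := by
    apply hinj
    rw [map_mul]
    exact heq
  refine ⟨u, ?_, hxu ▸ haJ⟩
  intro h0
  exact hu (by simp [hPdef, RingHom.mem_ker, h0])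

/-- The "above `α`" monomial ideal. -/
def Mup (le : (Fin N →₀ ℕ) → (Fin N →₀ ℕ) → Prop) (α : Fin N →₀ ℕ)
    (H : ∀ γ δ : Fin N →₀ ℕ, ¬ le δ α → ¬ le (γ + δ) α) : Ideal (PolyR N) where
  carrier := {f | ∀ β ∈ f.support, ¬ le β α}
  zero_mem' := by simp
  add_mem' := by
    intro a b ha hb β hβ
    rcases Finset.mem_union.mp (MvPolynomial.support_add hβ) with h | h
    · exact ha β h
    · exact hb β h
  smul_mem' := by
    intro c f hf β hβ
    have hβ' : β ∈ (c * f).support := by rwa [smul_eq_mul] at hβ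
    have := MvPolynomial.support_mul c f hβ'
    rw [Finset.mem_add] at this
    obtain ⟨γ, _, δ, hδ, rfl⟩ := this
    exact H γ δ (hf δ hδ)

end Aux12

/-- For a monomial order `le` on `ℕ^N` and any ideal `I ⊆ R`, the
lattice `ℕ^N` is the disjoint union of `in(D_0[I])` and `in(I)`. -/
theorem statement12 {N : ℕ} (hN : 1 ≤ N)
    (le : (Fin N →₀ ℕ) → (Fin N →₀ ℕ) → Prop)
    (hlin : IsLinearOrder (Fin N →₀ ℕ) le)
    (hzero : ∀ α, le 0 α)
    (hadd : ∀ α β γ, le α β → le (α + γ) (β + γ))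
    (I : Ideal (PolyR N)) :
    dualIn le (dualSpace I) = (localIn le I)ᶜ := by
  classical
  haveI := hlin
  have hrefl : ∀ β, le β β := fun β => refl_of le β
  have hanti : ∀ {a b}, le a b → le b a → a = b := fun h1 h2 => antisymm_of le h1 h2
  have htot : ∀ a b, le a b ∨ le b a := fun a b => total_of le a b
  have htrans : ∀ {a b c}, le a b → le b c → le a c := fun h1 h2 => trans_of le h1 h2
  ext α
  simp only [Set.mem_compl_iff]
  constructor
  · rintro ⟨q, hqD, hq0, hqα, hqmax⟩ ⟨f, hfI, hf0, hfα, hfmin⟩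
    have hqD' : ∀ g ∈ I, dapply q g = 0 := hqD
    have h : ∑ β ∈ f.support, q.coeff β * f.coeff β = 0 := hqD' f hfI
    have hsum : ∑ β ∈ f.support, q.coeff β * f.coeff β = q.coeff α * f.coeff α := by
      apply Finset.sum_eq_single_of_mem α hfα
      intro β hβ hne
      have hqβ : q.coeff β = 0 := by
        by_contra hc
        exact hne (hanti (hqmax β (MvPolynomial.mem_support_iff.mpr hc)) (hfmin β hβ))
      rw [hqβ, zero_mul]
    rw [hsum] at h
    exact mul_ne_zero (MvPolynomial.mem_support_iff.mp hqα)
      (MvPolynomial.mem_support_iff.mp hfα) h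
  · intro hαnot
    have hH : ∀ γ δ : Fin N →₀ ℕ, ¬ le δ α → ¬ le (γ + δ) α := by
      intro γ δ h hle
      apply h
      have h1 : le δ (γ + δ) := by
        have := hadd 0 γ δ (hzero γ)
        simpa [add_comm] using this
      exact htrans h1 hle
    set Mα : Ideal (PolyR N) := Aux12.Mup le α hH with hMα
    have hMα_mem : ∀ g : PolyR N, g ∈ Mα ↔ ∀ β ∈ g.support, ¬ le β α := fun g => Iff.rfl
    set J : Ideal (PolyR N) := I ⊔ Mα with hJ
    -- `x^α ∉ J`, else `α` would be a local initial exponent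
    have hXM_not : Aux12.XM α ∉ J := by
      intro hmem
      rcases Submodule.mem_sup.mp hmem with ⟨f, hfI, g, hg, hfg⟩
      apply hαnot
      have hgsupp : ∀ β, g.coeff β ≠ 0 → ¬ le β α := fun β h =>
        (hMα_mem g).mp hg β (MvPolynomial.mem_support_iff.mpr h)
      have hgα : g.coeff α = 0 := by
        by_contra h
        exact hgsupp α h (hrefl α)
      have hco : ∀ β, f.coeff β + g.coeff β = (Aux12.XM α).coeff β := by
        intro β
        rw [← MvPolynomial.coeff_add, hfg]
      have hfαc : f.coeff α = 1 := by
        have := hco α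
        rw [hgα, add_zero] at this
        simpa [Aux12.XM, MvPolynomial.coeff_monomial] using this
      have hαf : α ∈ f.support := MvPolynomial.mem_support_iff.mpr (by rw [hfαc]; exact one_ne_zero)
      refine ⟨f, hfI, ?_, hαf, ?_⟩
      · intro h0
        rw [h0] at hfαc
        simp at hfαc
      · intro β hβ
        rcases eq_or_ne β α with rfl | hne
        · exact hrefl β
        · rcases htot α β with h | h
          · exact h
          · exfalso
            have hXβ : (Aux12.XM α).coeff β = 0 := by
              simp [Aux12.XM, MvPolynomial.coeff_monomial, Ne.symm hne]
            have hgβ : g.coeff β ≠ 0 := by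
              have := hco β
              rw [hXβ] at this
              intro h0
              rw [h0, add_zero] at this
              exact MvPolynomial.mem_support_iff.mp hβ this
            exact hgsupp β hgβ h
    -- the truncated approximation spaces
    set U : ℕ → Submodule ℂ (PolyR N) := fun k =>
      (Submodule.restrictScalars ℂ (J : Ideal (PolyR N))) ⊔
        expSupported (fun β => k < Aux12.deg β) with hU
    have hUmono : ∀ {k k'}, k ≤ k' → U k' ≤ U k := by
      intro k k' hkk
      apply sup_le_sup_left
      intro g hg β hβ
      exact lt_of_le_of_lt hkk (hg β hβ)
    by_cases hall : ∀ k : ℕ, Aux12.XM α ∈ U k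
    · -- impossible: Krull intersection would force `x^α ∈ J`
      exfalso
      have hxk : ∀ k : ℕ, Aux12.XM α ∈ J ⊔ Aux12.mSpan N ^ (k + 1) := by
        intro k
        rcases Submodule.mem_sup.mp (hall k) with ⟨f, hf, g, hg, hfg⟩
        rw [Submodule.restrictScalars_mem] at hf
        rw [← hfg]
        exact Submodule.add_mem _ (Ideal.mem_sup_left hf)
          (Ideal.mem_sup_right (Aux12.high_mem_pow k g hg))
      obtain ⟨u, hu0, huJ⟩ := Aux12.krull J (Aux12.XM α) hxk
      set c : ℂ := MvPolynomial.constantCoeff u with hc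
      set u₀ : PolyR N := u - MvPolynomial.C c with hu₀def
      have hu₀mem : Aux12.XM α * u₀ ∈ Mα := by
        rw [hMα_mem]
        intro β hβ
        have hs := MvPolynomial.support_mul _ _ hβ
        rw [Aux12.support_XM] at hs
        rw [Finset.mem_add] at hs
        obtain ⟨γ, hγ, δ, hδ, rfl⟩ := hs
        rw [Finset.mem_singleton] at hγ
        rw [hγ]
        have hδ0 : δ ≠ 0 := by
          rintro rfl
          have : u₀.coeff 0 = 0 := by
            rw [hu₀def, MvPolynomial.coeff_sub, MvPolynomial.coeff_zero_C, hc,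
              MvPolynomial.constantCoeff_eq, sub_self]
          exact MvPolynomial.mem_support_iff.mp hδ this
        intro hle
        have h1 : le α (α + δ) := by
          have := hadd 0 δ α (hzero δ)
          simpa [add_comm] using this
        have := hanti hle h1
        exact hδ0 (by simpa using this)
      have hsplit : Aux12.XM α * MvPolynomial.C c = Aux12.XM α * u - Aux12.XM α * u₀ := by
        rw [hu₀def]; ring
      have hmem : Aux12.XM α * MvPolynomial.C c ∈ J := by
        rw [hsplit]
        exact Submodule.sub_mem _ huJ (Ideal.mem_sup_right hu₀mem)
      apply hXM_not
      have h2 := Ideal.mul_mem_left J (MvPolynomial.C c⁻¹) hmem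
      have h3 : MvPolynomial.C c⁻¹ * (Aux12.XM α * MvPolynomial.C c) = Aux12.XM α := by
        rw [mul_comm (Aux12.XM α), ← mul_assoc, ← MvPolynomial.C_mul,
          inv_mul_cancel₀ hu0, MvPolynomial.C_1, one_mul]
      rwa [h3] at h2
    · -- there is a functional separating `x^α` from `U k`
      push_neg at hall
      obtain ⟨k0, hk0⟩ := hall
      set k : ℕ := k0 + Aux12.deg α with hk
      have hknot : Aux12.XM α ∉ U k := fun h => hk0 (hUmono (Nat.le_add_right _ _) h)
      obtain ⟨lam, hlam1, hlam2⟩ :=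
        Submodule.exists_dual_map_eq_bot_of_notMem hknot inferInstance
      have hlamzero : ∀ g ∈ U k, lam g = 0 := by
        intro g hg
        have : lam g ∈ Submodule.map lam (U k) := Submodule.mem_map_of_mem hg
        rw [hlam2] at this
        simpa using this
      -- the ball of exponents of degree at most `k`
      set top : Fin N →₀ ℕ := Finsupp.equivFunOnFinite.symm (fun _ => k) with htop
      set ball : Finset (Fin N →₀ ℕ) :=
        (Finset.Iic top).filter (fun β => Aux12.deg β ≤ k) with hball
      have hmem_ball : ∀ β : Fin N →₀ ℕ, β ∈ ball ↔ Aux12.deg β ≤ k := by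
        intro β
        rw [hball, Finset.mem_filter]
        constructor
        · exact fun h => h.2
        · intro h
          refine ⟨Finset.mem_Iic.mpr ?_, h⟩
          rw [Finsupp.le_iff]
          intro i _
          have h1 : β i ≤ k := le_trans (Aux12.apply_le_deg β i) h
          simpa [htop] using h1
      set q : PolyR N := ∑ β ∈ ball, MvPolynomial.monomial β (lam (Aux12.XM β)) with hq
      have hqcoeff : ∀ γ, q.coeff γ = if γ ∈ ball then lam (Aux12.XM γ) else 0 := by
        intro γ
        rw [hq, MvPolynomial.coeff_sum]
        simp only [MvPolynomial.coeff_monomial]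
        exact Finset.sum_ite_eq' ball γ (fun β => lam (Aux12.XM β))
      -- `q` annihilates `J`
      have hqJ : ∀ f ∈ J, dapply q f = 0 := by
        intro f hf
        set low : PolyR N :=
          ∑ β ∈ f.support.filter (fun β => Aux12.deg β ≤ k),
            MvPolynomial.monomial β (f.coeff β) with hlow
        have hdq : dapply q f = lam low := by
          show ∑ β ∈ f.support, q.coeff β * f.coeff β = lam low
          rw [hlow, map_sum]
          rw [Finset.sum_filter]
          apply Finset.sum_congr rfl
          intro β _
          rw [hqcoeff β]
          by_cases hβk : Aux12.deg β ≤ k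
          · rw [if_pos ((hmem_ball β).mpr hβk), if_pos hβk]
            have : MvPolynomial.monomial β (f.coeff β) = f.coeff β • Aux12.XM β := by
              rw [Aux12.XM, MvPolynomial.smul_monomial, smul_eq_mul, mul_one]
            rw [this, map_smul, smul_eq_mul, mul_comm]
          · rw [if_neg (fun h => hβk ((hmem_ball β).mp h)), if_neg hβk, zero_mul]
        have hlowc : ∀ γ, low.coeff γ =
            if γ ∈ f.support.filter (fun β => Aux12.deg β ≤ k) then f.coeff γ else 0 := by
          intro γ
          rw [hlow, MvPolynomial.coeff_sum]
          simp only [MvPolynomial.coeff_monomial]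
          exact Finset.sum_ite_eq' _ γ _
        have hhigh : f - low ∈ expSupported (fun β => k < Aux12.deg β) := by
          intro γ hγ
          by_contra hdeg
          push_neg at hdeg
          apply MvPolynomial.mem_support_iff.mp hγ
          rw [MvPolynomial.coeff_sub, hlowc γ]
          by_cases hγf : γ ∈ f.support
          · rw [if_pos (Finset.mem_filter.mpr ⟨hγf, hdeg⟩), sub_self]
          · rw [if_neg (fun h => hγf (Finset.mem_filter.mp h).1),
              MvPolynomial.notMem_support_iff.mp hγf, sub_zero]
        have h1 : lam f = 0 :=
          hlamzero f (Submodule.mem_sup_left (by rwa [Submodule.restrictScalars_mem]))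
        have h2 : lam (f - low) = 0 := hlamzero _ (Submodule.mem_sup_right hhigh)
        rw [map_sub, h1, zero_sub, neg_eq_zero] at h2
        rw [hdq, h2]
      -- conclude
      have hαball : α ∈ ball := (hmem_ball α).mpr (by omega)
      have hqαc : q.coeff α = lam (Aux12.XM α) := by rw [hqcoeff α, if_pos hαball]
      have hqα0 : q.coeff α ≠ 0 := by rw [hqαc]; exact hlam1
      refine ⟨q, ?_, ?_, MvPolynomial.mem_support_iff.mpr hqα0, ?_⟩
      · exact fun f hf => hqJ f (Ideal.mem_sup_left hf)
      · intro h0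
        rw [h0] at hqα0
        simp at hqα0
      · intro β hβ
        by_contra hle
        have hXβ : Aux12.XM β ∈ Mα := by
          rw [hMα_mem]
          intro γ hγ
          rw [Aux12.support_XM, Finset.mem_singleton] at hγ
          subst hγ
          exact hle
        have hXβU : Aux12.XM β ∈ U k :=
          Submodule.mem_sup_left (by
            rw [Submodule.restrictScalars_mem]
            exact Ideal.mem_sup_right hXβ)
        have : lam (Aux12.XM β) = 0 := hlamzero _ hXβU
        apply MvPolynomial.mem_support_iff.mp hβ
        rw [hqcoeff β]
        split
        · exact this
        · rfl
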